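/- Let a, b be real numbers with a > 0, b > 0, a + b = 1, and define f(z,w) = (az + bw − zw)/(1 − bz − aw) on 𝔻². Then lim_{θ → 0} f(e^{iθ}, e^{itθ}) = 1 for every real t ≠ −b/a, while lim_{θ → 0} f(e^{iθ}, e^{itθ}) = −1 for t = −b/a (here the limit is over real θ → 0 with θ ≠ 0, along points where f is defined). In particular, f does not extend continuously to the closed bidisk. -/

import Mathlib

/-- The open unit bidisk in `ℂ²`. -/
def bidisk : Set (ℂ × ℂ) := {p | ‖p.1‖ < 1 ∧ ‖p.2‖ < 1}

/-- The Möbius map `ζ ↦ λ (ζ - a) / (1 - conj a ⬝ ζ)`. -/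
noncomputable def mobius (l a : ℂ) (z : ℂ) : ℂ :=
  l * (z - a) / (1 - (starRingEnd ℂ) a * z)

/-- `φ` is an automorphism of the unit disk: on the disk it agrees with a Möbius map
`ζ ↦ λ (ζ - a)/(1 - conj a ⬝ ζ)` with `|λ| = 1` and `|a| < 1`. -/
def IsDiskAut (φ : ℂ → ℂ) : Prop :=
  ∃ l a : ℂ, ‖l‖ = 1 ∧ ‖a‖ < 1 ∧ ∀ z : ℂ, ‖z‖ < 1 → φ z = mobius l a z

/-- A balanced disk in the bidisk: the image of the unit disk under `ζ ↦ (φ₁ ζ, φ₂ ζ)` for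
automorphisms `φ₁, φ₂` of the disk. -/
def IsBalancedDisk (D : Set (ℂ × ℂ)) : Prop :=
  ∃ φ₁ φ₂ : ℂ → ℂ, IsDiskAut φ₁ ∧ IsDiskAut φ₂ ∧
    D = {p : ℂ × ℂ | ∃ ζ : ℂ, ‖ζ‖ < 1 ∧ p = (φ₁ ζ, φ₂ ζ)}

/-- An extreme disk for `f`: a balanced disk on which the restriction of `f` is an
automorphism of the disk. -/
def IsExtremeDisk (f : ℂ × ℂ → ℂ) (D : Set (ℂ × ℂ)) : Prop :=
  ∃ φ₁ φ₂ : ℂ → ℂ, IsDiskAut φ₁ ∧ IsDiskAut φ₂ ∧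
    D = {p : ℂ × ℂ | ∃ ζ : ℂ, ‖ζ‖ < 1 ∧ p = (φ₁ ζ, φ₂ ζ)} ∧
    IsDiskAut (fun ζ => f (φ₁ ζ, φ₂ ζ))

/-- The extreme set `X(f)` of `f : 𝔻² → 𝔻`: the points of the bidisk at which
`1 - |f(z,w)|² = (1 - |z|²)|f₁(z,w)| + (1 - |w|²)|f₂(z,w)|`. -/
def extremeSet (f : ℂ × ℂ → ℂ) : Set (ℂ × ℂ) :=
  {p ∈ bidisk | 1 - ‖f p‖ ^ 2 =
    (1 - ‖p.1‖ ^ 2) * ‖fderiv ℂ f p (1, 0)‖ + (1 - ‖p.2‖ ^ 2) * ‖fderiv ℂ f p (0, 1)‖}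

open Complex Filter

namespace NoExtAux

open Set

noncomputable def hh (a b t : ℝ) (θ : ℝ) : ℂ :=
  1 - (b : ℂ) * Complex.exp (Complex.I * θ) - (a : ℂ) * Complex.exp (Complex.I * ((t : ℂ) * θ))

lemma hh_RS (a b t θ : ℝ) :
    hh a b t θ = ((1 - b * Real.cos θ - a * Real.cos (t*θ) : ℝ) : ℂ)
      + ((-(b * Real.sin θ + a * Real.sin (t*θ)) : ℝ) : ℂ) * Complex.I := by
  have h1 : Complex.I * (θ:ℂ) = (θ:ℂ) * Complex.I := mul_comm _ _
  have h2 : Complex.I * ((t:ℂ) * θ) = (((t*θ:ℝ)):ℂ) * Complex.I := by push_cast; ring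
  rw [hh, h1, h2, Complex.exp_mul_I, Complex.exp_mul_I,
    ← Complex.ofReal_cos, ← Complex.ofReal_sin, ← Complex.ofReal_cos, ← Complex.ofReal_sin]
  push_cast
  ring

lemma hh_ne (a b t : ℝ) (ha : 0 < a) (hb : 0 < b) (hab : a + b = 1) (θ : ℝ)
    (hθ : θ ≠ 0) (hθ2 : |θ| < 2 * Real.pi) : hh a b t θ ≠ 0 := by
  have hcos : Real.cos θ < 1 := by
    refine lt_of_le_of_ne (Real.cos_le_one θ) (fun h => hθ ?_)
    rw [abs_lt] at hθ2
    exact (Real.cos_eq_one_iff_of_lt_of_lt (by linarith) hθ2.2).1 h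
  have hre : 0 < (hh a b t θ).re := by
    rw [hh_RS]
    simp only [Complex.add_re, Complex.ofReal_re, Complex.mul_re, Complex.I_re, Complex.I_im,
      Complex.ofReal_im, mul_zero, zero_mul, sub_zero, mul_one, zero_sub]
    nlinarith [Real.cos_le_one (t*θ)]
  intro h
  rw [h] at hre
  simp at hre

lemma conj_hh (a b t θ : ℝ) : (starRingEnd ℂ) (hh a b t θ)
    = 1 - (b : ℂ) * Complex.exp (-(Complex.I * θ)) - (a : ℂ) * Complex.exp (-(Complex.I * ((t : ℂ) * θ))) := by
  simp only [hh, map_sub, map_one, map_mul, Complex.conj_ofReal, ← Complex.exp_conj,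
    Complex.conj_I, neg_mul]

lemma curve_eq (a b t : ℝ) (f : ℂ × ℂ → ℂ)
    (hfdef : ∀ p : ℂ × ℂ, f p = ((a : ℂ) * p.1 + (b : ℂ) * p.2 - p.1 * p.2) /
      (1 - (b : ℂ) * p.1 - (a : ℂ) * p.2)) (θ : ℝ) :
    f (Complex.exp (Complex.I * θ), Complex.exp (Complex.I * ((t:ℂ) * θ)))
      = -(Complex.exp (Complex.I * θ) * Complex.exp (Complex.I * ((t:ℂ) * θ)))
        * ((starRingEnd ℂ) (hh a b t θ) / hh a b t θ) := by
  rw [hfdef]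
  have hden : (1 - (b : ℂ) * Complex.exp (Complex.I * θ) - (a : ℂ) * Complex.exp (Complex.I * ((t:ℂ) * θ)))
      = hh a b t θ := rfl
  simp only [hden]
  rw [← mul_div_assoc]
  congr 1
  rw [conj_hh]
  have hz : Complex.exp (Complex.I * θ) * Complex.exp (-(Complex.I * θ)) = 1 := by
    rw [← Complex.exp_add]; simp
  have hw : Complex.exp (Complex.I * ((t:ℂ) * θ)) * Complex.exp (-(Complex.I * ((t:ℂ) * θ))) = 1 := by
    rw [← Complex.exp_add]; simp
  linear_combination (-((b:ℂ) * Complex.exp (Complex.I * ((t:ℂ) * θ)))) * hz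
    + (-((a:ℂ) * Complex.exp (Complex.I * θ))) * hw

lemma sin_div_lim : Tendsto (fun x : ℝ => Real.sin x / x) (nhdsWithin 0 {0}ᶜ) (nhds 1) := by
  have h : HasDerivAt Real.sin 1 0 := by simpa using Real.hasDerivAt_sin 0
  have := hasDerivAt_iff_tendsto_slope.1 h
  refine this.congr (fun x => ?_)
  simp [slope_def_field, div_eq_inv_mul]

lemma scale_lim (t : ℝ) (ht : t ≠ 0) :
    Tendsto (fun θ : ℝ => t * θ) (nhdsWithin 0 {0}ᶜ) (nhdsWithin 0 {0}ᶜ) := by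
  rw [tendsto_nhdsWithin_iff]
  constructor
  · have : Tendsto (fun θ : ℝ => t * θ) (nhds 0) (nhds (t * 0)) :=
      (continuous_const.mul continuous_id).tendsto 0
    simpa using this.mono_left nhdsWithin_le_nhds
  · filter_upwards [self_mem_nhdsWithin] with θ hθ
    exact mul_ne_zero ht hθ

lemma one_sub_cos_lim :
    Tendsto (fun x : ℝ => (1 - Real.cos x) / x ^ 2) (nhdsWithin 0 {0}ᶜ) (nhds (1/2)) := by
  have h2 : Tendsto (fun x : ℝ => (1/2) * (Real.sin (x/2) / (x/2)) ^ 2)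
      (nhdsWithin 0 {0}ᶜ) (nhds ((1/2) * 1 ^ 2)) := by
    have hs : Tendsto (fun x : ℝ => Real.sin (x/2) / (x/2)) (nhdsWithin 0 {0}ᶜ) (nhds 1) := by
      have h := sin_div_lim.comp (scale_lim (1/2) (by norm_num))
      refine h.congr (fun x => ?_)
      have hx2 : (2:ℝ)⁻¹ * x = x/2 := by ring
      simp only [Function.comp, one_div, hx2]
    exact ((hs.pow 2).const_mul (1/2))
  rw [show ((1:ℝ)/2) = (1/2) * 1 ^ 2 by norm_num]
  refine h2.congr' ?_
  filter_upwards [self_mem_nhdsWithin] with x (hx : x ≠ 0)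
  have h1 : 1 - Real.cos x = 2 * Real.sin (x/2) ^ 2 := by
    have h := Real.cos_two_mul (x/2)
    rw [show 2*(x/2) = x by ring] at h
    have h2 := Real.sin_sq_add_cos_sq (x/2)
    linarith
  rw [h1]
  field_simp

lemma sin_sub_bound (x : ℝ) (h1 : |x| ≤ 1) : |Real.sin x - x| ≤ |x| ^ 3 := by
  have key : ∀ y : ℝ, 0 ≤ y → y ≤ 1 → |Real.sin y - y| ≤ y ^ 3 := by
    intro y hy hy1
    rcases eq_or_lt_of_le hy with h | h
    · simp [← h]
    · have h2 := Real.sin_lt h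
      have h3 := Real.sin_gt_sub_cube h
      rw [abs_sub_comm, abs_of_pos (by linarith)]
      nlinarith
  rcases le_or_gt 0 x with hx | hx
  · rw [_root_.abs_of_nonneg hx] at h1 ⊢
    exact key x hx h1
  · rw [_root_.abs_of_neg hx] at h1 ⊢
    have h2 := key (-x) (by linarith) h1
    rw [Real.sin_neg] at h2
    have h3 : -Real.sin x - -x = -(Real.sin x - x) := by ring
    rw [h3, abs_neg] at h2
    exact h2

lemma sin_sub_lim :
    Tendsto (fun x : ℝ => (Real.sin x - x) / x ^ 2) (nhdsWithin 0 {0}ᶜ) (nhds 0) := by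
  have habs : Tendsto (fun x : ℝ => |x|) (nhdsWithin 0 {0}ᶜ) (nhds 0) := by
    have : Tendsto (fun x : ℝ => |x|) (nhds 0) (nhds |0|) := continuous_abs.tendsto 0
    simpa using this.mono_left nhdsWithin_le_nhds
  refine squeeze_zero_norm' ?_ habs
  have h1 : Set.Icc (-1:ℝ) 1 ∈ nhdsWithin (0:ℝ) {0}ᶜ :=
    nhdsWithin_le_nhds (Icc_mem_nhds (by norm_num) (by norm_num))
  filter_upwards [self_mem_nhdsWithin, h1] with x (hx : x ≠ 0) hx1
  have hx1' : |x| ≤ 1 := abs_le.2 ⟨hx1.1, hx1.2⟩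
  have hb := sin_sub_bound x hx1'
  rw [Real.norm_eq_abs, abs_div, _root_.abs_pow]
  rw [div_le_iff₀ (by positivity)]
  calc |Real.sin x - x| ≤ |x| ^ 3 := hb
  _ = |x| * |x| ^ 2 := by ring

lemma hh_zero (a b t : ℝ) (hab : a + b = 1) : hh a b t 0 = 0 := by
  have h : (a:ℂ) + b = 1 := by exact_mod_cast congrArg (Complex.ofReal) hab
  simp only [hh, Complex.ofReal_zero, mul_zero, Complex.exp_zero, mul_one]
  linear_combination -h

lemma exp_deriv_real (s : ℝ) :
    HasDerivAt (fun θ : ℝ => Complex.exp (Complex.I * ((s:ℂ) * θ))) ((s:ℂ) * Complex.I) 0 := by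
  have h1 : HasDerivAt (fun z : ℂ => Complex.exp (Complex.I * z))
      (Complex.exp (Complex.I * ((0:ℝ):ℂ)) * (Complex.I * 1)) ((0:ℝ):ℂ) :=
    (Complex.hasDerivAt_exp _).comp _ ((hasDerivAt_id (((0:ℝ):ℂ))).const_mul Complex.I)
  have h2 : HasDerivAt (fun θ : ℝ => Complex.exp (Complex.I * θ)) Complex.I 0 := by
    have := h1.comp_ofReal
    simpa using this
  have h3 : HasDerivAt (fun θ : ℝ => s * θ) s 0 := by
    simpa using (hasDerivAt_id (0:ℝ)).const_mul s
  have h4 : HasDerivAt ((fun θ : ℝ => Complex.exp (Complex.I * θ)) ∘ (fun θ : ℝ => s * θ))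
      (s • Complex.I) 0 := by
    refine HasDerivAt.scomp 0 ?_ h3
    simpa using h2
  have h5 : ((fun θ : ℝ => Complex.exp (Complex.I * θ)) ∘ (fun θ : ℝ => s * θ))
      = fun θ : ℝ => Complex.exp (Complex.I * ((s:ℂ) * θ)) := by
    funext θ; simp only [Function.comp_apply]; norm_cast
  rw [h5] at h4
  simpa [Complex.real_smul] using h4

lemma hh_deriv (a b t : ℝ) :
    HasDerivAt (fun θ : ℝ => hh a b t θ) (-Complex.I * ((b : ℂ) + (a : ℂ) * (t : ℂ))) 0 := by
  have h1 : HasDerivAt (fun θ : ℝ => Complex.exp (Complex.I * θ)) Complex.I 0 := by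
    simpa using exp_deriv_real 1
  have h2 := exp_deriv_real t
  have h3 := ((hasDerivAt_const (0:ℝ) (1:ℂ)).sub (h1.const_mul (b:ℂ))).sub (h2.const_mul (a:ℂ))
  have h4 : (0 : ℂ) - (b:ℂ) * Complex.I - (a:ℂ) * ((t:ℂ) * Complex.I)
      = -Complex.I * ((b : ℂ) + (a : ℂ) * (t : ℂ)) := by ring
  rw [h4] at h3
  exact h3

lemma case1 (a b t : ℝ) (hab : a + b = 1) :
    Tendsto (fun θ : ℝ => hh a b t θ / (θ : ℂ)) (nhdsWithin 0 {0}ᶜ)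
      (nhds (-Complex.I * ((b : ℂ) + (a : ℂ) * (t : ℂ)))) := by
  have h := hasDerivAt_iff_tendsto_slope.1 (hh_deriv a b t)
  refine h.congr (fun θ => ?_)
  rw [slope_def_module, hh_zero a b t hab, sub_zero, sub_zero, Complex.real_smul,
    Complex.ofReal_inv, div_eq_inv_mul]

lemma case2 (a b : ℝ) (ha : 0 < a) (hb : 0 < b) (hab : a + b = 1) :
    Tendsto (fun θ : ℝ => hh a b (-b/a) θ / (θ : ℂ) ^ 2) (nhdsWithin 0 {0}ᶜ)
      (nhds (((b + a * (-b/a) ^ 2) / 2 : ℝ) : ℂ)) := by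
  set t : ℝ := -b/a with htdef
  have ht : t ≠ 0 := by
    simp only [htdef, neg_div]
    exact neg_ne_zero.2 (div_ne_zero hb.ne' ha.ne')
  have hat : a * t = -b := by
    rw [htdef, mul_div_assoc', mul_comm, mul_div_assoc, div_self ha.ne', mul_one]
  have TR : Tendsto (fun θ : ℝ => (1 - b * Real.cos θ - a * Real.cos (t*θ)) / θ ^ 2)
      (nhdsWithin 0 {0}ᶜ) (nhds ((b + a * t ^ 2) / 2)) := by
    have l1 : Tendsto (fun θ : ℝ => b * ((1 - Real.cos θ) / θ ^ 2))
        (nhdsWithin 0 {0}ᶜ) (nhds (b * (1/2))) := one_sub_cos_lim.const_mul b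
    have l2 : Tendsto (fun θ : ℝ => (a * t ^ 2) * ((1 - Real.cos (t*θ)) / (t*θ) ^ 2))
        (nhdsWithin 0 {0}ᶜ) (nhds ((a * t ^ 2) * (1/2))) :=
      (one_sub_cos_lim.comp (scale_lim t ht)).const_mul _
    have l3 := l1.add l2
    have heq : ∀ᶠ θ in nhdsWithin (0:ℝ) {0}ᶜ,
        b * ((1 - Real.cos θ) / θ ^ 2) + (a * t ^ 2) * ((1 - Real.cos (t*θ)) / (t*θ) ^ 2)
          = (1 - b * Real.cos θ - a * Real.cos (t*θ)) / θ ^ 2 := by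
      filter_upwards [self_mem_nhdsWithin] with θ (hθ : θ ≠ 0)
      have h1 : 1 - b * Real.cos θ - a * Real.cos (t*θ)
          = b * (1 - Real.cos θ) + a * (1 - Real.cos (t*θ)) := by nlinarith [hab]
      rw [h1]
      field_simp
    have h := l3.congr' heq
    convert h using 2
    ring
  have TS : Tendsto (fun θ : ℝ => (-(b * Real.sin θ + a * Real.sin (t*θ))) / θ ^ 2)
      (nhdsWithin 0 {0}ᶜ) (nhds 0) := by
    have l1 : Tendsto (fun θ : ℝ => (-b) * ((Real.sin θ - θ) / θ ^ 2))
        (nhdsWithin 0 {0}ᶜ) (nhds ((-b) * 0)) := sin_sub_lim.const_mul (-b)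
    have l2 : Tendsto (fun θ : ℝ => (-(a * t ^ 2)) * ((Real.sin (t*θ) - t*θ) / (t*θ) ^ 2))
        (nhdsWithin 0 {0}ᶜ) (nhds ((-(a * t ^ 2)) * 0)) :=
      (sin_sub_lim.comp (scale_lim t ht)).const_mul _
    have l3 := l1.add l2
    have heq : ∀ᶠ θ in nhdsWithin (0:ℝ) {0}ᶜ,
        (-b) * ((Real.sin θ - θ) / θ ^ 2) + (-(a * t ^ 2)) * ((Real.sin (t*θ) - t*θ) / (t*θ) ^ 2)
          = (-(b * Real.sin θ + a * Real.sin (t*θ))) / θ ^ 2 := by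
      filter_upwards [self_mem_nhdsWithin] with θ (hθ : θ ≠ 0)
      have h1 : -(b * Real.sin θ + a * Real.sin (t*θ))
          = (-b) * (Real.sin θ - θ) + (-a) * (Real.sin (t*θ) - t*θ) := by
        have h0 : b * θ + a * (t * θ) = 0 := by rw [← mul_assoc, hat]; ring
        nlinarith [h0]
      rw [h1]
      field_simp
    have h := l3.congr' heq
    convert h using 2
    ring
  have TC : Tendsto (fun θ : ℝ =>
      (((1 - b * Real.cos θ - a * Real.cos (t*θ)) / θ ^ 2 : ℝ) : ℂ)
      + (((-(b * Real.sin θ + a * Real.sin (t*θ))) / θ ^ 2 : ℝ) : ℂ) * Complex.I)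
      (nhdsWithin 0 {0}ᶜ)
      (nhds ((((b + a * t ^ 2) / 2 : ℝ) : ℂ) + ((0:ℝ):ℂ) * Complex.I)) :=
    ((Complex.continuous_ofReal.tendsto _).comp TR).add
      (((Complex.continuous_ofReal.tendsto _).comp TS).mul_const Complex.I)
  have heq2 : ∀ᶠ θ in nhdsWithin (0:ℝ) {0}ᶜ,
      (((1 - b * Real.cos θ - a * Real.cos (t*θ)) / θ ^ 2 : ℝ) : ℂ)
      + (((-(b * Real.sin θ + a * Real.sin (t*θ))) / θ ^ 2 : ℝ) : ℂ) * Complex.I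
        = hh a b t θ / (θ : ℂ) ^ 2 := by
    filter_upwards [self_mem_nhdsWithin] with θ (hθ : θ ≠ 0)
    have hθc : ((θ:ℂ)) ^ 2 ≠ 0 := pow_ne_zero _ (Complex.ofReal_ne_zero.2 hθ)
    rw [hh_RS]
    push_cast
    field_simp
  have TC2 := TC.congr' heq2
  simpa using TC2

lemma ratio_lim (u : ℝ → ℂ) (k : ℕ) (c : ℂ) (hc : c ≠ 0)
    (hu : Tendsto (fun θ : ℝ => u θ / (θ : ℂ) ^ k) (nhdsWithin 0 {0}ᶜ) (nhds c)) :
    Tendsto (fun θ : ℝ => (starRingEnd ℂ) (u θ) / u θ) (nhdsWithin 0 {0}ᶜ)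
      (nhds ((starRingEnd ℂ) c / c)) := by
  have h1 : Tendsto (fun θ : ℝ => (starRingEnd ℂ) (u θ / (θ : ℂ) ^ k)) (nhdsWithin 0 {0}ᶜ)
      (nhds ((starRingEnd ℂ) c)) := (Complex.continuous_conj.tendsto c).comp hu
  have h2 := h1.div hu hc
  refine h2.congr' ?_
  filter_upwards [self_mem_nhdsWithin] with θ (hθ : θ ≠ 0)
  have hθ' : ((θ:ℂ)) ^ k ≠ 0 := pow_ne_zero _ (Complex.ofReal_ne_zero.2 hθ)
  simp only [Pi.div_apply]
  rw [map_div₀, map_pow, Complex.conj_ofReal]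
  rcases eq_or_ne (u θ) 0 with h | h
  · simp [h]
  · field_simp

lemma main_lim (a b t : ℝ) (f : ℂ × ℂ → ℂ)
    (hfdef : ∀ p : ℂ × ℂ, f p = ((a : ℂ) * p.1 + (b : ℂ) * p.2 - p.1 * p.2) /
      (1 - (b : ℂ) * p.1 - (a : ℂ) * p.2)) (k : ℕ) (c : ℂ) (hc : c ≠ 0)
    (hlim : Tendsto (fun θ : ℝ => hh a b t θ / (θ : ℂ) ^ k) (nhdsWithin 0 {0}ᶜ) (nhds c)) :
    Tendsto (fun θ : ℝ => f (Complex.exp (Complex.I * θ), Complex.exp (Complex.I * ((t:ℂ) * θ))))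
      (nhdsWithin 0 {0}ᶜ) (nhds (-((starRingEnd ℂ) c / c))) := by
  have hr := ratio_lim (fun θ => hh a b t θ) k c hc hlim
  have hzw : Tendsto (fun θ : ℝ => -(Complex.exp (Complex.I * θ) * Complex.exp (Complex.I * ((t:ℂ) * θ))))
      (nhdsWithin (0:ℝ) {0}ᶜ) (nhds (-1)) := by
    have c1 : Continuous fun θ : ℝ => Complex.exp (Complex.I * θ) :=
      Complex.continuous_exp.comp (continuous_const.mul Complex.continuous_ofReal)
    have c2 : Continuous fun θ : ℝ => Complex.exp (Complex.I * ((t:ℂ) * θ)) :=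
      Complex.continuous_exp.comp (continuous_const.mul (continuous_const.mul Complex.continuous_ofReal))
    have h := ((c1.mul c2).neg).tendsto' 0 (-1) (by simp)
    exact h.mono_left nhdsWithin_le_nhds
  have h := hzw.mul hr
  rw [show (-1 : ℂ) * ((starRingEnd ℂ) c / c) = -((starRingEnd ℂ) c / c) by ring] at h
  exact h.congr (fun θ => (curve_eq a b t f hfdef θ).symm)

lemma closure_bidisk : closure bidisk = (Metric.closedBall (0:ℂ) 1) ×ˢ (Metric.closedBall (0:ℂ) 1) := by
  have h : bidisk = (Metric.ball (0:ℂ) 1) ×ˢ (Metric.ball (0:ℂ) 1) := by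
    ext p
    simp [bidisk, Set.mem_prod, mem_ball_zero_iff]
  rw [h, closure_prod_eq, closure_ball (0:ℂ) one_ne_zero]

lemma boundary_agree (a b : ℝ) (f g : ℂ × ℂ → ℂ)
    (hfdef : ∀ p : ℂ × ℂ, f p = ((a : ℂ) * p.1 + (b : ℂ) * p.2 - p.1 * p.2) /
      (1 - (b : ℂ) * p.1 - (a : ℂ) * p.2))
    (hg : ContinuousOn g (closure bidisk)) (hgf : ∀ p ∈ bidisk, g p = f p)
    (q : ℂ × ℂ) (hq1 : ‖q.1‖ = 1) (hq2 : ‖q.2‖ = 1)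
    (hden : 1 - (b:ℂ) * q.1 - (a:ℂ) * q.2 ≠ 0) : g q = f q := by
  have hqc : q ∈ closure bidisk := by
    rw [closure_bidisk]
    exact ⟨mem_closedBall_zero_iff.2 hq1.le, mem_closedBall_zero_iff.2 hq2.le⟩
  set path : ℝ → ℂ × ℂ := fun r => ((r:ℂ) * q.1, (r:ℂ) * q.2) with hpathdef
  have hmemIoo : Set.Ioo (0:ℝ) 1 ∈ nhdsWithin (1:ℝ) (Set.Iio 1) :=
    Ioo_mem_nhdsLT_of_mem ⟨zero_lt_one, le_refl 1⟩
  have hpath_mem : ∀ r : ℝ, r ∈ Set.Ioo (0:ℝ) 1 → path r ∈ bidisk := by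
    intro r hr
    constructor <;>
    · simp only [hpathdef, norm_mul, Complex.norm_real, Real.norm_eq_abs, hq1, hq2, mul_one,
        abs_of_pos hr.1]
      exact hr.2
  have hpath_tendsto : Tendsto path (nhdsWithin (1:ℝ) (Set.Iio 1)) (nhdsWithin q bidisk) := by
    rw [tendsto_nhdsWithin_iff]
    constructor
    · have hc : Continuous path := by
        refine Continuous.prodMk ?_ ?_ <;>
          exact (Complex.continuous_ofReal.mul continuous_const)
      have := hc.tendsto' 1 q (by simp [hpathdef])
      exact this.mono_left nhdsWithin_le_nhds
    · filter_upwards [hmemIoo] with r hr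
      exact hpath_mem r hr
  have hgq : Tendsto (fun r => g (path r)) (nhdsWithin (1:ℝ) (Set.Iio 1)) (nhds (g q)) :=
    (hg q hqc).tendsto.comp (hpath_tendsto.mono_right (nhdsWithin_mono _ subset_closure))
  have hfc : ContinuousAt f q := by
    have hf : f = fun p : ℂ × ℂ => ((a : ℂ) * p.1 + (b : ℂ) * p.2 - p.1 * p.2) /
        (1 - (b : ℂ) * p.1 - (a : ℂ) * p.2) := funext hfdef
    rw [hf]
    exact ContinuousAt.div (by fun_prop) (by fun_prop) hden
  have hfq : Tendsto (fun r => f (path r)) (nhdsWithin (1:ℝ) (Set.Iio 1)) (nhds (f q)) :=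
    hfc.tendsto.comp (hpath_tendsto.mono_right nhdsWithin_le_nhds)
  have heq : ∀ᶠ r in nhdsWithin (1:ℝ) (Set.Iio 1), g (path r) = f (path r) := by
    filter_upwards [hmemIoo] with r hr
    exact hgf _ (hpath_mem r hr)
  exact tendsto_nhds_unique (hgq.congr' heq) hfq

end NoExtAux

/-- For `a, b > 0` with `a + b = 1`, the extremal function
`f(z,w) = (az + bw - zw)/(1 - bz - aw)` satisfies
`lim_{θ→0} f(e^{iθ}, e^{itθ}) = 1` for `t ≠ -b/a` and `= -1` for `t = -b/a`; in
particular `f` does not extend continuously to the closed bidisk. -/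
theorem extremal_no_continuous_extension (a b : ℝ) (ha : 0 < a) (hb : 0 < b)
    (hab : a + b = 1) (f : ℂ × ℂ → ℂ)
    (hfdef : ∀ p : ℂ × ℂ, f p = ((a : ℂ) * p.1 + (b : ℂ) * p.2 - p.1 * p.2) /
      (1 - (b : ℂ) * p.1 - (a : ℂ) * p.2)) :
    (∀ t : ℝ, t ≠ -b / a →
      Tendsto (fun θ : ℝ =>
          f (Complex.exp (Complex.I * (θ : ℂ)), Complex.exp (Complex.I * ((t : ℂ) * (θ : ℂ)))))
        (nhdsWithin (0 : ℝ) {(0 : ℝ)}ᶜ) (nhds 1)) ∧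
    (Tendsto (fun θ : ℝ =>
          f (Complex.exp (Complex.I * (θ : ℂ)),
            Complex.exp (Complex.I * (((-b / a : ℝ) : ℂ) * (θ : ℂ)))))
        (nhdsWithin (0 : ℝ) {(0 : ℝ)}ᶜ) (nhds (-1))) ∧
    ¬∃ g : ℂ × ℂ → ℂ, ContinuousOn g (closure bidisk) ∧ ∀ p ∈ bidisk, g p = f p := by
  have part1 : ∀ t : ℝ, t ≠ -b / a →
      Tendsto (fun θ : ℝ =>
          f (Complex.exp (Complex.I * (θ : ℂ)), Complex.exp (Complex.I * ((t : ℂ) * (θ : ℂ)))))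
        (nhdsWithin (0 : ℝ) {(0 : ℝ)}ᶜ) (nhds 1) := by
    intro t ht
    have hba : b + a * t ≠ 0 := by
      intro h
      apply ht
      field_simp
      linarith
    set c : ℂ := -(Complex.I * ((b : ℂ) + (a : ℂ) * (t : ℂ))) with hcdef
    have hsne : (((b + a * t : ℝ)) : ℂ) ≠ 0 := Complex.ofReal_ne_zero.2 hba
    have hcs : c = -Complex.I * (((b + a * t : ℝ)) : ℂ) := by rw [hcdef]; push_cast; ring
    have hc : c ≠ 0 := by
      rw [hcs]
      exact mul_ne_zero (neg_ne_zero.2 Complex.I_ne_zero) hsne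
    have hratio : (starRingEnd ℂ) c / c = -1 := by
      have hconj : (starRingEnd ℂ) c = Complex.I * (((b + a * t : ℝ)) : ℂ) := by
        rw [hcs]
        simp [map_mul, Complex.conj_I, Complex.conj_ofReal]
      rw [hconj, hcs, neg_mul, div_neg, div_self (mul_ne_zero Complex.I_ne_zero hsne)]
    have hlim := NoExtAux.case1 a b t hab
    have hlim1 : Tendsto (fun θ : ℝ => NoExtAux.hh a b t θ / (θ : ℂ) ^ 1)
        (nhdsWithin 0 {0}ᶜ) (nhds c) := by simpa using hlim
    have h := NoExtAux.main_lim a b t f hfdef 1 c hc hlim1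
    rw [hratio] at h
    simpa using h
  have part2 : Tendsto (fun θ : ℝ =>
          f (Complex.exp (Complex.I * (θ : ℂ)),
            Complex.exp (Complex.I * (((-b / a : ℝ) : ℂ) * (θ : ℂ)))))
        (nhdsWithin (0 : ℝ) {(0 : ℝ)}ᶜ) (nhds (-1)) := by
    set c : ℂ := (((b + a * (-b/a) ^ 2) / 2 : ℝ) : ℂ) with hcdef
    have hcpos : (0:ℝ) < (b + a * (-b/a) ^ 2) / 2 := by
      have h0 : 0 ≤ a * (-b/a) ^ 2 := mul_nonneg ha.le (sq_nonneg _)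
      linarith
    have hc : c ≠ 0 := Complex.ofReal_ne_zero.2 hcpos.ne'
    have hratio : (starRingEnd ℂ) c / c = 1 := by
      rw [hcdef, Complex.conj_ofReal, div_self hc]
    have h := NoExtAux.main_lim a b (-b/a) f hfdef 2 c hc (NoExtAux.case2 a b ha hb hab)
    rw [hratio] at h
    exact h
  refine ⟨part1, part2, ?_⟩
  rintro ⟨g, hg, hgf⟩
  have h11 : ((1:ℂ), (1:ℂ)) ∈ closure bidisk := by
    rw [NoExtAux.closure_bidisk]
    constructor <;> simp
  have hnorm : ∀ x : ℝ, ‖Complex.exp (Complex.I * (x:ℂ))‖ = 1 := by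
    intro x
    rw [mul_comm, Complex.norm_exp_ofReal_mul_I]
  have hnorm2 : ∀ t x : ℝ, ‖Complex.exp (Complex.I * ((t:ℂ) * (x:ℂ)))‖ = 1 := by
    intro t x
    rw [show ((t:ℂ) * (x:ℂ)) = (((t*x:ℝ)):ℂ) by push_cast; ring]
    exact hnorm (t*x)
  have hcurve : ∀ t : ℝ, Tendsto (fun θ : ℝ =>
      g (Complex.exp (Complex.I * (θ : ℂ)), Complex.exp (Complex.I * ((t : ℂ) * (θ : ℂ)))))
      (nhdsWithin (0 : ℝ) {(0 : ℝ)}ᶜ) (nhds (g (1, 1))) := by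
    intro t
    have hc : Continuous (fun θ : ℝ =>
        ((Complex.exp (Complex.I * (θ : ℂ)), Complex.exp (Complex.I * ((t : ℂ) * (θ : ℂ)))) : ℂ × ℂ)) := by
      refine Continuous.prodMk ?_ ?_
      · exact Complex.continuous_exp.comp (continuous_const.mul Complex.continuous_ofReal)
      · exact Complex.continuous_exp.comp (continuous_const.mul (continuous_const.mul Complex.continuous_ofReal))
    have hmem : ∀ θ : ℝ,
        ((Complex.exp (Complex.I * (θ : ℂ)), Complex.exp (Complex.I * ((t : ℂ) * (θ : ℂ)))) : ℂ × ℂ)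
          ∈ closure bidisk := by
      intro θ
      rw [NoExtAux.closure_bidisk]
      exact ⟨mem_closedBall_zero_iff.2 (le_of_eq (hnorm θ)),
        mem_closedBall_zero_iff.2 (le_of_eq (hnorm2 t θ))⟩
    refine (hg (1,1) h11).tendsto.comp ?_
    rw [tendsto_nhdsWithin_iff]
    constructor
    · exact (hc.tendsto' 0 (1,1) (by simp)).mono_left nhdsWithin_le_nhds
    · exact Filter.Eventually.of_forall hmem
  have hagree : ∀ t : ℝ, ∀ᶠ (θ : ℝ) in nhdsWithin (0:ℝ) {(0:ℝ)}ᶜ,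
      g (Complex.exp (Complex.I * (θ : ℂ)), Complex.exp (Complex.I * ((t : ℂ) * (θ : ℂ))))
        = f (Complex.exp (Complex.I * (θ : ℂ)), Complex.exp (Complex.I * ((t : ℂ) * (θ : ℂ)))) := by
    intro t
    have hIoo : Set.Ioo (-(2*Real.pi)) (2*Real.pi) ∈ nhdsWithin (0:ℝ) {(0:ℝ)}ᶜ :=
      nhdsWithin_le_nhds (Ioo_mem_nhds (by linarith [Real.pi_pos]) (by linarith [Real.pi_pos]))
    filter_upwards [self_mem_nhdsWithin, hIoo] with θ (hθ : θ ≠ 0) hθ2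
    refine NoExtAux.boundary_agree a b f g hfdef hg hgf _ (hnorm θ) (hnorm2 t θ) ?_
    exact NoExtAux.hh_ne a b t ha hb hab θ hθ (abs_lt.2 ⟨hθ2.1, hθ2.2⟩)
  have ht1 : (1:ℝ) ≠ -b / a := by
    have h0 : 0 < b / a := div_pos hb ha
    intro h
    rw [neg_div] at h
    linarith
  have e1 : g (1,1) = 1 := tendsto_nhds_unique ((hcurve 1).congr' (hagree 1)) (part1 1 ht1)
  have e2 : g (1,1) = -1 := tendsto_nhds_unique ((hcurve (-b/a)).congr' (hagree (-b/a))) part2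
  rw [e1] at e2
  norm_num at e2
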